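/- For all α ∈ (0, π/4], tan(β₀(α)) − tan(t(α)) = 2·tan α / (7 − 7·cos(2α) + cos(4α)) ≥ 0, where tan(β₀(α)) = sin(3α)/(2·cos α − cos(3α)) and tan(t(α)) = (sin(3α) − sin α)/(3·cos α − cos(3α)). Hence β₀(α) ≥ t(α). -/

import Mathlib

set_option maxHeartbeats 1000000


open Real

theorem beta0_ge_t (α : ℝ) (hα : α ∈ Set.Ioc 0 (π/4)) :
    let β₀ := (1/2) * Real.arccos ((-2 * Real.cos (4*α) + Real.cos (6*α) + 2)
      / (3 - 2 * Real.cos (4*α)))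
    let t := Real.arctan ((Real.sin (3*α) - Real.sin α)
      / (3 * Real.cos α - Real.cos (3*α)))
    Real.tan β₀ = Real.sin (3*α) / (2 * Real.cos α - Real.cos (3*α)) ∧
    Real.tan t = (Real.sin (3*α) - Real.sin α) / (3 * Real.cos α - Real.cos (3*α)) ∧
    Real.tan β₀ - Real.tan t = 2 * Real.tan α / (7 - 7 * Real.cos (2*α) + Real.cos (4*α)) ∧
    2 * Real.tan α / (7 - 7 * Real.cos (2*α) + Real.cos (4*α)) ≥ 0 ∧
    β₀ ≥ t := by
  obtain ⟨h0, h1⟩ := hα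
  have hπ := Real.pi_pos
  have hc : 0 < Real.cos α := Real.cos_pos_of_mem_Ioo ⟨by linarith, by linarith⟩
  have hs : 0 < Real.sin α := Real.sin_pos_of_pos_of_lt_pi h0 (by linarith)
  set c := Real.cos α with hcdef
  set s := Real.sin α with hsdef
  have hsc : s ^ 2 = 1 - c ^ 2 := by
    have := Real.sin_sq_add_cos_sq α; rw [← hcdef, ← hsdef] at this; linarith
  have h3c : Real.cos (3*α) = 4*c^3 - 3*c := by rw [Real.cos_three_mul]
  have h3s : Real.sin (3*α) = 3*s - 4*s^3 := by rw [Real.sin_three_mul]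
  have h2c : Real.cos (2*α) = 2*c^2 - 1 := by rw [Real.cos_two_mul]
  have h4c : Real.cos (4*α) = 2*(2*c^2-1)^2 - 1 := by
    have h : (4:ℝ)*α = 2*(2*α) := by ring
    rw [h, Real.cos_two_mul, h2c]
  have h6c : Real.cos (6*α) = 4*(2*c^2-1)^3 - 3*(2*c^2-1) := by
    have h : (6:ℝ)*α = 3*(2*α) := by ring
    rw [h, Real.cos_three_mul, h2c]
  have hc1 : c ≤ 1 := Real.cos_le_one α
  have hcsq : c^2 ≤ 1 := by nlinarith
  have hC : 0 < 2*c - Real.cos (3*α) := by rw [h3c]; nlinarith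
  have hC2 : 0 < 3*c - Real.cos (3*α) := by rw [h3c]; nlinarith
  have hS : 0 < Real.sin (3*α) := by
    apply Real.sin_pos_of_pos_of_lt_pi (by linarith) (by linarith)
  have hS2 : Real.sin (3*α) ^ 2 = 1 - (4*c^3 - 3*c)^2 := by
    have := Real.sin_sq_add_cos_sq (3*α); rw [h3c] at this; linarith
  intro β₀ t
  set r := Real.sin (3*α) / (2*c - Real.cos (3*α)) with hrdef
  have hr : 0 < r := div_pos hS hC
  set γ := Real.arctan r with hγdef
  have hγ0 : 0 ≤ γ := by
    rw [hγdef, ← Real.arctan_zero]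
    exact Real.arctan_strictMono.monotone hr.le
  have hγ2 : γ < π/2 := Real.arctan_lt_pi_div_two r
  have hCc : (5*c - 4*c^3) ≠ 0 := by nlinarith
  have hq : (0:ℝ) < 1 + 16*c^2 - 16*c^4 := by nlinarith
  have hx : (-2 * Real.cos (4*α) + Real.cos (6*α) + 2) / (3 - 2 * Real.cos (4*α))
      = Real.cos (2*γ) := by
    rw [hγdef, Real.cos_two_mul, Real.cos_sq_arctan]
    have hr2 : r ^ 2 = (1 - (4*c^3 - 3*c)^2) / (5*c - 4*c^3)^2 := by
      rw [hrdef, div_pow, hS2, h3c]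
      congr 1; ring
    have hsum : 1 + r ^ 2 = (1 + 16*c^2 - 16*c^4) / (5*c - 4*c^3)^2 := by
      have h54 : (5 - 4*c^2 : ℝ) ≠ 0 := by nlinarith
      rw [hr2]; field_simp; ring
    rw [hsum, h4c, h6c]
    have hD' : 3 - 2 * (2*(2*c^2-1)^2 - 1) ≠ 0 := by nlinarith
    have hq' : (1 + c^2*16 - c^4*16 : ℝ) ≠ 0 := by nlinarith
    have h54 : (5 - 4*c^2 : ℝ) ≠ 0 := by nlinarith
    field_simp
    ring
  have hβγ : β₀ = γ := by
    show (1/2) * Real.arccos _ = γ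
    rw [hx, Real.arccos_cos (by linarith) (by linarith)]
    ring
  have e1 : Real.tan β₀ = Real.sin (3*α) / (2 * c - Real.cos (3*α)) := by
    rw [hβγ, hγdef, Real.tan_arctan, hrdef]
  have e2 : Real.tan t = (Real.sin (3*α) - s) / (3 * c - Real.cos (3*α)) := by
    rw [Real.tan_arctan]
  have hden : (0:ℝ) < (5 - 4*c^2) * (3 - 2*c^2) := mul_pos (by linarith) (by linarith)
  have hden7 : 7 - 7 * Real.cos (2*α) + Real.cos (4*α) = (5 - 4*c^2) * (3 - 2*c^2) := by
    rw [h2c, h4c]; ring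
  have e3 : Real.tan β₀ - Real.tan t
      = 2 * Real.tan α / (7 - 7 * Real.cos (2*α) + Real.cos (4*α)) := by
    rw [e1, e2, hden7, h3s, h3c, Real.tan_eq_sin_div_cos, ← hcdef, ← hsdef]
    have hC' : (2*c - (4*c^3 - 3*c)) ≠ 0 := by rw [h3c] at hC; linarith
    have hC2' : (3*c - (4*c^3 - 3*c)) ≠ 0 := by rw [h3c] at hC2; linarith
    have hB : (2*c - (4*c^3 - 3*c)) * (3*c - (4*c^3 - 3*c)) ≠ 0 := mul_ne_zero hC' hC2'
    have hE : c * ((5 - 4*c^2) * (3 - 2*c^2)) ≠ 0 := by positivity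
    have hrhs : 2 * (s/c) / ((5 - 4*c^2) * (3 - 2*c^2))
        = (2*s) / (c * ((5 - 4*c^2) * (3 - 2*c^2))) := by
      field_simp
    rw [div_sub_div _ _ hC' hC2', hrhs, div_eq_div_iff hB hE]
    linear_combination (-4*s*c*(c * ((5 - 4*c^2) * (3 - 2*c^2)))) * hsc
  have e4 : 2 * Real.tan α / (7 - 7 * Real.cos (2*α) + Real.cos (4*α)) ≥ 0 := by
    rw [hden7]
    have ht : 0 ≤ Real.tan α := by
      rw [Real.tan_eq_sin_div_cos, ← hcdef, ← hsdef]; positivity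
    positivity
  refine ⟨e1, e2, e3, e4, ?_⟩
  have h' : 0 ≤ Real.tan β₀ - Real.tan t := e3 ▸ e4
  rw [e1, e2] at h'
  have hle : (Real.sin (3*α) - s) / (3 * c - Real.cos (3*α)) ≤ r := by
    rw [hrdef]; linarith
  calc t ≤ Real.arctan r := Real.arctan_strictMono.monotone hle
    _ = β₀ := hβγ.symm
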